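/- Let G = SL(2,3) be the special linear group of 2×2 matrices of determinant 1 over the field with 3 elements, let A be a Sylow 2-subgroup of G (so A is isomorphic to the quaternion group Q₈), and let H be a cyclic subgroup of A of order 4. Then A is a (0,2)-regular set of the pair (G,H), yet G ≠ N_G(H)A. (In particular, the converse of the first assertion of Theorem C fails for s = 2.) -/

import Mathlib

open scoped Pointwise

/-- A subset `C` of the vertices of a graph `Γ` is an `(r,s)`-regular set if every vertex
in `C` has exactly `r` neighbours in `C` and every vertex outside `C` has exactly `s`
neighbours in `C`. -/
def IsRegularVertexSet {V : Type*} (Γ : SimpleGraph V) (C : Set V) (r s : ℕ) : Prop :=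
  (∀ v ∈ C, {w | w ∈ C ∧ Γ.Adj v w}.ncard = r) ∧
  ∀ v ∉ C, {w | w ∈ C ∧ Γ.Adj v w}.ncard = s

/-- The coset graph `Cos(G,H,U)` on the left cosets of `H` in `G`:
`g₁H` and `g₂H` are adjacent iff `g₁⁻¹ g₂ ∈ U`. -/
def cosetGraph {G : Type*} [Group G] (H : Subgroup G) (U : Set G) : SimpleGraph (G ⧸ H) :=
  SimpleGraph.fromRel fun C D =>
    ∃ g₁ g₂ : G, QuotientGroup.mk g₁ = C ∧ QuotientGroup.mk g₂ = D ∧ g₁⁻¹ * g₂ ∈ U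

/-- `U` is a valid connection set for a coset graph `Cos(G,H,U)`:
inverse-closed, disjoint from `H`, and a union of double cosets of `H` (`HUH = U`). -/
def IsCosetGraphConnectionSet {G : Type*} [Group G] (H : Subgroup G) (U : Set G) : Prop :=
  U⁻¹ = U ∧ (H : Set G) ∩ U = ∅ ∧ (H : Set G) * U * (H : Set G) = U

/-- `A` is an `(r,s)`-regular set of the pair `(G,H)`: there is a coset graph
`Cos(G,H,U)` in which the set of left cosets of `H` in `A` is an `(r,s)`-regular set. -/
def IsRegularSetOfPair {G : Type*} [Group G] (H A : Subgroup G) (r s : ℕ) : Prop :=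
  ∃ U : Set G, IsCosetGraphConnectionSet H U ∧
    IsRegularVertexSet (cosetGraph H U)
      {C : G ⧸ H | ∃ a ∈ A, QuotientGroup.mk a = C} r s

/-- `A` is a perfect code of the pair `(G,H)` iff it is a `(0,1)`-regular set of `(G,H)`. -/
def IsPerfectCodeOfPair {G : Type*} [Group G] (H A : Subgroup G) : Prop :=
  IsRegularSetOfPair H A 0 1

/-- A subgroup `A` is an `(r,s)`-regular set of `G` iff it is an `(r,s)`-regular set of
the pair `(G,1)`, i.e. an `(r,s)`-regular set in some Cayley graph of `G`. -/
def IsRegularSetOfGroup {G : Type*} [Group G] (A : Subgroup G) (r s : ℕ) : Prop :=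
  IsRegularSetOfPair ⊥ A r s

/-- A subgroup `A` is a perfect code of `G` iff it is a `(0,1)`-regular set of `G`. -/
def IsPerfectCodeOfGroup {G : Type*} [Group G] (A : Subgroup G) : Prop :=
  IsRegularSetOfGroup A 0 1

/-- The conjugate subgroup `K^t = t⁻¹ K t`. -/
def conjSub {G : Type*} [Group G] (K : Subgroup G) (t : G) : Subgroup G :=
  K.map (MulAut.conj t⁻¹).toMonoidHom


namespace RemarkSL23Aux

abbrev GG := Matrix.SpecialLinearGroup (Fin 2) (ZMod 3)

instance : DecidableEq GG := fun a b =>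
  decidable_of_iff (a.1 = b.1)
    (by cases a; cases b;
        exact ⟨fun h => by subst h; rfl, fun h => congrArg Subtype.val h⟩)

def ww : GG := ⟨!![1,1;0,1], by decide⟩

theorem key : ∀ x : GG, x^4 = 1 → x^2 ≠ 1 → ∀ k : Fin 4, x^(k:ℕ) ≠ ww * x * ww⁻¹ := by
  decide

theorem cardGG : Nat.card GG = 24 := by
  rw [Nat.card_eq_fintype_card]; decide

theorem fact24 : (Nat.factorization 24) 2 = 3 := by
  have h : (24:ℕ) = 2^3 * 3 := by norm_num
  rw [h, Nat.factorization_mul (by norm_num) (by norm_num),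
    Nat.Prime.factorization_pow Nat.prime_two, Nat.Prime.factorization Nat.prime_three]
  simp

end RemarkSL23Aux

/-- **Remark.** Let `G = SL(2,3)`, let `A` be a Sylow `2`-subgroup of `G` (so `A ≅ Q₈`),
and let `H` be a cyclic subgroup of `A` of order `4`. Then `A` is a `(0,2)`-regular set
of the pair `(G,H)`, yet `G ≠ N_G(H)A`. -/
theorem remark_SL23 (A H : Subgroup (Matrix.SpecialLinearGroup (Fin 2) (ZMod 3)))
    (hA : ∃ P : Sylow 2 (Matrix.SpecialLinearGroup (Fin 2) (ZMod 3)), A = ↑P)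
    (hHA : H ≤ A) (hHcyc : IsCyclic ↥H) (hHcard : Nat.card ↥H = 4) :
    IsRegularSetOfPair H A 0 2 ∧
      (Subgroup.normalizer (H : Set (Matrix.SpecialLinearGroup (Fin 2) (ZMod 3))) : Set (Matrix.SpecialLinearGroup (Fin 2) (ZMod 3))) * (A : Set _)
        ≠ Set.univ := by
  classical
  haveI : Fact (Nat.Prime 2) := ⟨Nat.prime_two⟩
  set G := RemarkSL23Aux.GG with hGdef
  -- cardinality of A
  have hAcard : Nat.card ↥A = 8 := by
    obtain ⟨P, rfl⟩ := hA
    have h := Sylow.card_eq_multiplicity P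
    rwa [RemarkSL23Aux.cardGG, RemarkSL23Aux.fact24] at h
  -- index 2 facts
  set K := H.subgroupOf A with hKdef
  have hKcard : Nat.card ↥K = 4 := by
    rw [← hHcard]
    exact Nat.card_congr (Subgroup.subgroupOfEquivOfLe hHA).toEquiv
  have hKindex : K.index = 2 := by
    have h := Subgroup.card_mul_index K
    rw [hKcard, hAcard] at h
    omega
  have hidx2 : ∀ {a b : G}, a ∈ A → b ∈ A → a ∉ H → b ∉ H → a⁻¹ * b ∈ H := by
    intro a b ha hb hna hnb
    have h1 : ((⟨a, ha⟩ : ↥A)⁻¹ * ⟨b, hb⟩) ∈ K := by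
      rw [Subgroup.mul_mem_iff_of_index_two hKindex]
      simp only [hKdef, Subgroup.mem_subgroupOf]
      simp [hna, hnb]
    simpa [hKdef, Subgroup.mem_subgroupOf] using h1
  have hne : H ≠ A := by
    intro h
    rw [h, hAcard] at hHcard
    omega
  obtain ⟨j, hjA, hjH⟩ := SetLike.exists_of_lt (lt_of_le_of_ne hHA hne)
  have hmk1j : (QuotientGroup.mk (1:G) : G ⧸ H) ≠ QuotientGroup.mk j := by
    rw [Ne, QuotientGroup.eq]
    simpa using hjH
  have hAset_eq : {C : G ⧸ H | ∃ a ∈ A, QuotientGroup.mk a = C}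
      = {QuotientGroup.mk (1:G), QuotientGroup.mk j} := by
    ext C
    constructor
    · rintro ⟨a, ha, rfl⟩
      by_cases h : a ∈ H
      · left
        show QuotientGroup.mk a = QuotientGroup.mk 1
        rw [QuotientGroup.eq]
        simpa using H.inv_mem h
      · right
        show QuotientGroup.mk a = QuotientGroup.mk j
        rw [QuotientGroup.eq]
        exact hidx2 ha hjA h hjH
    · rintro (rfl | rfl)
      exacts [⟨1, one_mem A, rfl⟩, ⟨j, hjA, rfl⟩]
  have hmem : ∀ {g a : G}, a ∈ A → (QuotientGroup.mk g : G ⧸ H) = QuotientGroup.mk a → g ∈ A := by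
    intro g a ha h
    have h1 : g⁻¹ * a ∈ H := QuotientGroup.eq.mp h
    have h2 : g = a * (g⁻¹ * a)⁻¹ := by rw [mul_inv_rev, inv_inv, mul_inv_cancel_left]
    rw [h2]
    exact A.mul_mem ha (A.inv_mem (hHA h1))
  have hAleN : A ≤ Subgroup.normalizer (H : Set G) := by
    have conj_mem : ∀ a ∈ A, ∀ h ∈ H, a * h * a⁻¹ ∈ H := by
      intro a ha h hh
      have hhK : (⟨h, hHA hh⟩ : ↥A) ∈ K := by
        simp only [hKdef, Subgroup.mem_subgroupOf]; exact hh
      have h1 : (⟨a, ha⟩ : ↥A) * ⟨h, hHA hh⟩ * (⟨a, ha⟩ : ↥A)⁻¹ ∈ K := by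
        rw [Subgroup.mul_mem_iff_of_index_two hKindex,
          Subgroup.mul_mem_iff_of_index_two hKindex]
        simp [hhK]
      simpa [hKdef, Subgroup.mem_subgroupOf] using h1
    intro a ha
    rw [Subgroup.mem_normalizer_iff]
    intro h
    constructor
    · exact fun hh => conj_mem a ha h hh
    · intro hh
      have h1 := conj_mem a⁻¹ (A.inv_mem ha) _ hh
      have h2 : a⁻¹ * (a * h * a⁻¹) * a⁻¹⁻¹ = h := by group
      rwa [h2] at h1
  refine ⟨⟨(↑A : Set G)ᶜ, ⟨?_, ?_, ?_⟩, ?_, ?_⟩, ?_⟩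
  · -- U⁻¹ = U
    ext x
    simp [Set.mem_inv]
  · -- H ∩ U = ∅
    ext x
    simp only [Set.mem_inter_iff, Set.mem_compl_iff, SetLike.mem_coe,
      Set.mem_empty_iff_false, iff_false, not_and, not_not]
    exact fun h => hHA h
  · -- HUH = U
    ext x
    simp only [Set.mem_mul, Set.mem_compl_iff, SetLike.mem_coe]
    constructor
    · rintro ⟨y, ⟨h1, hh1, u, hu, rfl⟩, h2, hh2, rfl⟩ hx
      apply hu
      have h3 : u = h1⁻¹ * (h1 * u * h2) * h2⁻¹ := by group
      rw [h3]
      exact A.mul_mem (A.mul_mem (A.inv_mem (hHA hh1)) hx) (A.inv_mem (hHA hh2))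
    · intro hx
      exact ⟨x, ⟨1, H.one_mem, x, hx, one_mul x⟩, 1, H.one_mem, mul_one x⟩
  · -- vertices inside have 0 neighbours inside
    intro v hv
    have hempty : {w | w ∈ {C : G ⧸ H | ∃ a ∈ A, QuotientGroup.mk a = C} ∧
        (cosetGraph H (↑A : Set G)ᶜ).Adj v w} = ∅ := by
      ext w
      simp only [Set.mem_setOf_eq, Set.mem_empty_iff_false, iff_false, not_and]
      rintro ⟨b, hb, rfl⟩ hadj
      obtain ⟨a, ha, rfl⟩ := hv
      rw [cosetGraph, SimpleGraph.fromRel_adj] at hadj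
      rcases hadj.2 with ⟨g1, g2, hg1, hg2, hg⟩ | ⟨g1, g2, hg1, hg2, hg⟩
      · exact hg (A.mul_mem (A.inv_mem (hmem ha hg1)) (hmem hb hg2))
      · exact hg (A.mul_mem (A.inv_mem (hmem hb hg1)) (hmem ha hg2))
    rw [hempty]
    exact Set.ncard_empty _
  · -- vertices outside have 2 neighbours inside
    intro v hv
    obtain ⟨g, rfl⟩ := QuotientGroup.mk_surjective v
    have hgA : g ∉ A := fun h => hv ⟨g, h, rfl⟩
    have hset : {w | w ∈ {C : G ⧸ H | ∃ a ∈ A, QuotientGroup.mk a = C} ∧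
        (cosetGraph H (↑A : Set G)ᶜ).Adj (QuotientGroup.mk g) w}
        = {C : G ⧸ H | ∃ a ∈ A, QuotientGroup.mk a = C} := by
      ext w
      simp only [Set.mem_setOf_eq]
      constructor
      · exact fun h => h.1
      · rintro ⟨a, ha, rfl⟩
        refine ⟨⟨a, ha, rfl⟩, ?_⟩
        rw [cosetGraph, SimpleGraph.fromRel_adj]
        refine ⟨fun h => hv ⟨a, ha, h.symm⟩, Or.inl ⟨g, a, rfl, rfl, ?_⟩⟩
        intro hmem'
        apply hgA
        have h2 : g = a * (g⁻¹ * a)⁻¹ := by group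
        rw [h2]
        exact A.mul_mem ha (A.inv_mem hmem')
    rw [hset, hAset_eq]
    exact Set.ncard_pair hmk1j
  · -- N(H) * A ≠ univ
    have hwN : RemarkSL23Aux.ww ∉ Subgroup.normalizer (H : Set G) := by
      intro hw
      obtain ⟨gen, hgen⟩ := hHcyc.exists_generator
      set x : G := (gen : G) with hxdef
      have hzp : Subgroup.zpowers x = H := by
        apply le_antisymm
        · exact (Subgroup.zpowers_le).mpr gen.2
        · intro h hh
          obtain ⟨k, hk⟩ := hgen ⟨h, hh⟩
          exact ⟨k, by simpa using congrArg Subtype.val hk⟩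
      have hord : orderOf x = 4 := by
        have h := Nat.card_zpowers x
        rw [hzp, hHcard] at h
        omega
      have hx4 : x ^ 4 = 1 := by
        rw [← hord]; exact pow_orderOf_eq_one x
      have hx2 : x ^ 2 ≠ 1 := by
        intro h
        have hd := orderOf_dvd_of_pow_eq_one h
        rw [hord] at hd
        exact absurd (Nat.le_of_dvd (by norm_num) hd) (by norm_num)
      have hconj : RemarkSL23Aux.ww * x * RemarkSL23Aux.ww⁻¹ ∈ H :=
        (Subgroup.mem_normalizer_iff.mp hw x).mp gen.2
      rw [← hzp] at hconj
      obtain ⟨k, hk⟩ := Subgroup.mem_zpowers_iff.mp hconj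
      have h4 : ((4:ℤ)) = (orderOf x : ℤ) := by rw [hord]; norm_num
      have hk' : x ^ ((k % 4).toNat) = RemarkSL23Aux.ww * x * RemarkSL23Aux.ww⁻¹ := by
        rw [← hk, ← zpow_natCast, Int.toNat_of_nonneg (Int.emod_nonneg k (by norm_num))]
        rw [h4, zpow_mod_orderOf]
      have hlt : (k % 4).toNat < 4 := by
        have h1 := Int.emod_lt_of_pos k (show (0:ℤ) < 4 by norm_num)
        have h2 := Int.emod_nonneg k (show (4:ℤ) ≠ 0 by norm_num)
        omega
      exact RemarkSL23Aux.key x hx4 hx2 ⟨_, hlt⟩ hk'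
    intro hcontra
    have hmemw : RemarkSL23Aux.ww ∈ (Subgroup.normalizer (H : Set G) : Set G) * (A : Set G) := by
      rw [hcontra]; trivial
    rw [Set.mem_mul] at hmemw
    obtain ⟨n, hn, a, ha, heq⟩ := hmemw
    exact hwN (heq ▸ (Subgroup.normalizer (H : Set G)).mul_mem hn (hAleN ha))
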